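/- Assume V is finite and nonempty, E is strongly connected, and λ is a multiplier function on V. Then for every L > 0, exactly one of the following two alternatives holds: (1) there exists a family of consistent handicaps for L (so the graph is box expansive by L); or (2) there exists a simple cycle c of some length n with cycle multiplier ∏_{i<n} λ(c i) < L^n (an obstruction showing that no family of consistent handicaps for L exists). -/

import Mathlib

/-- `c` is a cycle of length `n` in the directed graph with edge relation `E`. -/
def IsCycle {V : Type*} (E : V → V → Prop) (n : ℕ) (c : Fin (n + 1) → V) : Prop :=
  c (Fin.last n) = c 0 ∧ ∀ i : Fin n, E (c i.castSucc) (c i.succ)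

/-- The cycle `c` of length `n` is simple, i.e. its first `n` vertices are
pairwise distinct. -/
def IsSimpleCycle {V : Type*} (n : ℕ) (c : Fin (n + 1) → V) : Prop :=
  ∀ i j : Fin n, c i.castSucc = c j.castSucc → i = j

/-- The cycle multiplier of a cycle of length `n`. -/
def cycleMult {V : Type*} (lam : V → ℝ) (n : ℕ) (c : Fin (n + 1) → V) : ℝ :=
  ∏ i : Fin n, lam (c i.castSucc)

section BellmanAux
open Finset
variable {V : Type*} [Fintype V] [Nonempty V]

/-- `c` restricted to `{0, …, m}` is a walk of length `m`. -/
def IsWalk (E : V → V → Prop) (m : ℕ) (c : ℕ → V) : Prop :=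
  ∀ i < m, E (c i) (c (i + 1))

/-- The weight of a walk of length `m`: the product of `mu` over edge sources. -/
noncomputable def wprod (mu : V → ℝ) (m : ℕ) (c : ℕ → V) : ℝ :=
  ∏ i ∈ Finset.range m, mu (c i)

-- Bellman-type iteration: `phiSeq E mu m v` is the largest weight of a walk
-- with at most `m` edges ending at `v`.
open Classical in
noncomputable def phiSeq (E : V → V → Prop) (mu : V → ℝ) : ℕ → V → ℝ
  | 0 => fun _ => 1
  | m + 1 => fun v =>
      Finset.univ.sup' Finset.univ_nonempty
        (fun k => if E k v then max (mu k * phiSeq E mu m k) (phiSeq E mu m v)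
          else phiSeq E mu m v)

lemma phiSeq_le_succ (E : V → V → Prop) (mu : V → ℝ) (m : ℕ) (v : V) :
    phiSeq E mu m v ≤ phiSeq E mu (m + 1) v := by
  classical
  obtain ⟨k⟩ := ‹Nonempty V›
  refine le_trans ?_ (Finset.le_sup' _ (Finset.mem_univ k))
  split
  · exact le_max_right _ _
  · exact le_refl _

lemma phiSeq_mono (E : V → V → Prop) (mu : V → ℝ) {m m' : ℕ} (h : m ≤ m') (v : V) :
    phiSeq E mu m v ≤ phiSeq E mu m' v := by
  induction h with
  | refl => exact le_refl _
  | step _ ih => exact ih.trans (phiSeq_le_succ _ _ _ _)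

lemma phiSeq_pos (E : V → V → Prop) (mu : V → ℝ) (m : ℕ) (v : V) :
    0 < phiSeq E mu m v := by
  have h1 : phiSeq E mu 0 v = 1 := rfl
  have := phiSeq_mono E mu (Nat.zero_le m) v
  rw [h1] at this
  linarith

lemma phiSeq_edge (E : V → V → Prop) (mu : V → ℝ) (m : ℕ) {k v : V} (h : E k v) :
    mu k * phiSeq E mu m k ≤ phiSeq E mu (m + 1) v := by
  classical
  refine le_trans ?_ (Finset.le_sup' _ (Finset.mem_univ k))
  rw [if_pos h]
  exact le_max_left _ _

/-- Every value of the Bellman iterate is the weight of some walk. -/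
lemma phiSeq_achieved (E : V → V → Prop) (mu : V → ℝ) :
    ∀ m (v : V), ∃ l ≤ m, ∃ c : ℕ → V,
      IsWalk E l c ∧ c l = v ∧ wprod mu l c = phiSeq E mu m v := by
  classical
  intro m
  induction m with
  | zero =>
    intro v
    refine ⟨0, le_refl _, fun _ => v, ?_, rfl, ?_⟩
    · intro i hi; omega
    · simp [wprod, phiSeq]
  | succ m IH =>
    intro v
    have hsup : ∃ k ∈ Finset.univ, phiSeq E mu (m + 1) v =
        (fun k => if E k v then max (mu k * phiSeq E mu m k) (phiSeq E mu m v)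
          else phiSeq E mu m v) k := by
      exact Finset.exists_mem_eq_sup' Finset.univ_nonempty _
    obtain ⟨k, -, hk⟩ := hsup
    dsimp only at hk
    by_cases hE : E k v
    · rw [if_pos hE] at hk
      rcases le_total (mu k * phiSeq E mu m k) (phiSeq E mu m v) with h | h
      · rw [max_eq_right h] at hk
        obtain ⟨l, hl, c, hw, he, hp⟩ := IH v
        exact ⟨l, hl.trans (Nat.le_succ m), c, hw, he, by rw [hp, hk]⟩
      · rw [max_eq_left h] at hk
        obtain ⟨l, hl, c, hw, he, hp⟩ := IH k
        refine ⟨l + 1, by omega, fun i => if i ≤ l then c i else v, ?_, ?_, ?_⟩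
        · intro i hi
          rcases Nat.lt_or_ge i l with h1 | h1
          · simp only [if_pos (by omega : i ≤ l), if_pos (by omega : i + 1 ≤ l)]
            exact hw i h1
          · have hil : i = l := by omega
            subst hil
            simp only [if_pos (le_refl i), if_neg (by omega : ¬ i + 1 ≤ i)]
            rw [he]; exact hE
        · simp only [if_neg (by omega : ¬ l + 1 ≤ l)]
        · rw [wprod, Finset.prod_range_succ]
          have h1 : ∏ i ∈ Finset.range l, mu (if i ≤ l then c i else v)
              = wprod mu l c := by
            refine Finset.prod_congr rfl fun i hi => ?_
            rw [Finset.mem_range] at hi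
            rw [if_pos (by omega)]
          rw [h1, if_pos (le_refl l), he, hp, hk, mul_comm]
    · rw [if_neg hE] at hk
      obtain ⟨l, hl, c, hw, he, hp⟩ := IH v
      exact ⟨l, hl.trans (Nat.le_succ m), c, hw, he, by rw [hp, hk]⟩

/-- Every walk weight is bounded by the corresponding Bellman iterate. -/
lemma wprod_le_phiSeq (E : V → V → Prop) (mu : V → ℝ) (hmu : ∀ k, 0 < mu k) :
    ∀ m (c : ℕ → V), IsWalk E m c → wprod mu m c ≤ phiSeq E mu m (c m) := by
  intro m
  induction m with
  | zero =>
    intro c _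
    simp [wprod, phiSeq]
  | succ m IH =>
    intro c hc
    have hpref : IsWalk E m c := fun i hi => hc i (by omega)
    have h1 : wprod mu (m + 1) c = wprod mu m c * mu (c m) := by
      rw [wprod, wprod, Finset.prod_range_succ]
    rw [h1]
    calc wprod mu m c * mu (c m) ≤ phiSeq E mu m (c m) * mu (c m) :=
          mul_le_mul_of_nonneg_right (IH c hpref) (hmu _).le
      _ = mu (c m) * phiSeq E mu m (c m) := mul_comm _ _
      _ ≤ phiSeq E mu (m + 1) (c (m + 1)) := phiSeq_edge E mu m (hc m (by omega))

/-- Key lemma: if there is no bad simple cycle, every walk weight is bounded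
by the Bellman iterate at step `card V - 1` (remove simple cycles one by one). -/
lemma walk_bound (E : V → V → Prop) (lam : V → ℝ) (hlam : ∀ v, 0 < lam v)
    (L : ℝ) (hL : 0 < L)
    (hgood : ∀ n : ℕ, 1 ≤ n → ∀ c : Fin (n + 1) → V,
      IsCycle E n c → IsSimpleCycle n c → L ^ n ≤ cycleMult lam n c) :
    ∀ m (c : ℕ → V), IsWalk E m c →
      wprod (fun k => L / lam k) m c ≤
        phiSeq E (fun k => L / lam k) (Fintype.card V - 1) (c m) := by
  classical
  set N := Fintype.card V with hNdef
  have hNpos : 1 ≤ N := Fintype.card_pos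
  set mu : V → ℝ := fun k => L / lam k with hmudef
  have hmu : ∀ k, 0 < mu k := fun k => div_pos hL (hlam k)
  intro m
  induction m using Nat.strong_induction_on with
  | _ m IHstrong =>
    intro c hc
    by_cases hm : m ≤ N - 1
    · exact (wprod_le_phiSeq E mu hmu m c hc).trans (phiSeq_mono E mu hm (c m))
    · have hmN : N ≤ m := by omega
      -- there is a duplicate among c 0, ..., c N
      have hdup : ∃ j, ∃ i < j, c i = c j := by
        have hcard : Fintype.card V < Fintype.card (Fin (N + 1)) := by
          simp [hNdef]
        obtain ⟨x, y, hxy, hcxy⟩ :=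
          Fintype.exists_ne_map_eq_of_card_lt (fun t : Fin (N + 1) => c t.val) hcard
        rcases lt_or_gt_of_ne (fun h : x = y => hxy h) with h | h
        · exact ⟨y.val, x.val, h, hcxy⟩
        · exact ⟨x.val, y.val, h, hcxy.symm⟩
      set j0 := Nat.find hdup with hj0def
      obtain ⟨i0, hi0lt, hceq⟩ : ∃ i < j0, c i = c j0 := Nat.find_spec hdup
      have hmin : ∀ j < j0, ¬ ∃ i < j, c i = c j := fun j hj => Nat.find_min hdup hj
      have hj0N : j0 ≤ N := by
        obtain ⟨x, y, hxy, hcxy⟩ :=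
          Fintype.exists_ne_map_eq_of_card_lt (fun t : Fin (N + 1) => c t.val)
            (by simp [hNdef])
        rcases lt_or_gt_of_ne (fun h : x = y => hxy h) with h | h
        · exact le_trans (Nat.find_min' hdup ⟨x.val, h, hcxy⟩) (by omega)
        · exact le_trans (Nat.find_min' hdup ⟨y.val, h, hcxy.symm⟩) (by omega)
      have hj0m : j0 ≤ m := hj0N.trans hmN
      set d := j0 - i0 with hddef
      have hd1 : 1 ≤ d := by omega
      have hij : i0 + d = j0 := by omega
      -- distinctness below j0
      have hdist : ∀ a b, a < b → b < j0 → c a ≠ c b := by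
        intro a b hab hb hne
        exact hmin b hb ⟨a, hab, hne⟩
      -- the extracted simple cycle
      set cyc : Fin (d + 1) → V := fun t => c (i0 + t.val) with hcycdef
      have hcyc : IsCycle E d cyc := by
        constructor
        · show c (i0 + (Fin.last d).val) = c (i0 + (0 : Fin (d + 1)).val)
          simp only [Fin.val_last, Fin.val_zero, Nat.add_zero]
          rw [hij, ← hceq]
        · intro t
          show E (c (i0 + t.castSucc.val)) (c (i0 + t.succ.val))
          simp only [Fin.coe_castSucc, Fin.val_succ]
          have : i0 + (t.val + 1) = (i0 + t.val) + 1 := by omega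
          rw [this]
          exact hc (i0 + t.val) (by have := t.isLt; omega)
      have hsimp : IsSimpleCycle d cyc := by
        intro s t hst
        have hst' : c (i0 + s.val) = c (i0 + t.val) := hst
        by_contra hne
        have hne' : s.val ≠ t.val := fun h => hne (Fin.ext h)
        rcases Nat.lt_or_ge s.val t.val with h | h
        · exact hdist (i0 + s.val) (i0 + t.val) (by omega)
            (by have := t.isLt; omega) hst'
        · exact hdist (i0 + t.val) (i0 + s.val) (by omega)
            (by have := s.isLt; omega) hst'.symm
      -- the cycle weight is at most 1
      have hcycprod : ∏ i ∈ Finset.Ico i0 j0, mu (c i) ≤ 1 := by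
        have hM : L ^ d ≤ cycleMult lam d cyc := hgood d hd1 cyc hcyc hsimp
        have hMeq : cycleMult lam d cyc = ∏ i ∈ Finset.Ico i0 j0, lam (c i) := by
          rw [cycleMult]
          have h1 : ∀ i : Fin d, lam (cyc i.castSucc) = lam (c (i0 + i.val)) := by
            intro i; rfl
          rw [Finset.prod_congr rfl (fun i _ => h1 i)]
          rw [Fin.prod_univ_eq_prod_range (fun t => lam (c (i0 + t))) d]
          rw [Finset.prod_Ico_eq_prod_range]
        have hprodpos : 0 < ∏ i ∈ Finset.Ico i0 j0, lam (c i) :=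
          Finset.prod_pos fun i _ => hlam _
        have heq : ∏ i ∈ Finset.Ico i0 j0, mu (c i)
            = L ^ d / ∏ i ∈ Finset.Ico i0 j0, lam (c i) := by
          rw [hmudef]
          rw [Finset.prod_div_distrib, Finset.prod_const, Nat.card_Ico]
        rw [heq]
        rw [div_le_one hprodpos]
        rw [hMeq] at hM
        exact hM
      -- the spliced walk
      set c' : ℕ → V := fun i => if i < i0 then c i else c (i + d) with hc'def
      have hc'walk : IsWalk E (m - d) c' := by
        intro i hi
        by_cases h1 : i + 1 < i0
        · show E (c' i) (c' (i + 1))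
          simp only [hc'def, if_pos (by omega : i < i0), if_pos h1]
          exact hc i (by omega)
        · by_cases h2 : i < i0
          · -- i + 1 = i0
            have h3 : i + 1 = i0 := by omega
            show E (c' i) (c' (i + 1))
            simp only [hc'def, if_pos h2, if_neg (by omega : ¬ i + 1 < i0)]
            rw [h3, hij, ← hceq, ← h3]
            exact hc i (by omega)
          · show E (c' i) (c' (i + 1))
            simp only [hc'def, if_neg h2, if_neg (by omega : ¬ i + 1 < i0)]
            have : i + 1 + d = (i + d) + 1 := by omega
            rw [this]
            exact hc (i + d) (by omega)
      have hc'end : c' (m - d) = c m := by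
        simp only [hc'def, if_neg (by omega : ¬ m - d < i0)]
        congr 1
        omega
      -- product splitting
      have hsplit : wprod mu m c =
          wprod mu (m - d) c' * ∏ i ∈ Finset.Ico i0 j0, mu (c i) := by
        have e1 : wprod mu m c = (∏ i ∈ Finset.Ico 0 i0, mu (c i)) *
            (∏ i ∈ Finset.Ico i0 j0, mu (c i)) *
            (∏ i ∈ Finset.Ico j0 m, mu (c i)) := by
          rw [wprod, Finset.range_eq_Ico,
            ← Finset.prod_Ico_consecutive _ (Nat.zero_le j0) hj0m,
            ← Finset.prod_Ico_consecutive _ (Nat.zero_le i0) hi0lt.le]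
        have e2 : wprod mu (m - d) c' = (∏ i ∈ Finset.Ico 0 i0, mu (c i)) *
            (∏ i ∈ Finset.Ico j0 m, mu (c i)) := by
          rw [wprod, Finset.range_eq_Ico,
            ← Finset.prod_Ico_consecutive _ (Nat.zero_le i0) (by omega : i0 ≤ m - d)]
          congr 1
          · refine Finset.prod_congr rfl fun i hi => ?_
            rw [Finset.mem_Ico] at hi
            simp only [hc'def, if_pos hi.2]
          · have e3 : ∏ i ∈ Finset.Ico i0 (m - d), mu (c' i)
                = ∏ i ∈ Finset.Ico i0 (m - d), mu (c (i + d)) := by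
              refine Finset.prod_congr rfl fun i hi => ?_
              rw [Finset.mem_Ico] at hi
              simp only [hc'def, if_neg (by omega : ¬ i < i0)]
            rw [e3, Finset.prod_Ico_eq_prod_range, Finset.prod_Ico_eq_prod_range]
            rw [show m - d - i0 = m - j0 by omega]
            refine Finset.prod_congr rfl fun t _ => ?_
            rw [show i0 + t + d = j0 + t by omega]
        rw [e1, e2]
        ring
      -- finish via strong induction
      have hIH := IHstrong (m - d) (by omega) c' hc'walk
      rw [hc'end] at hIH
      have hwnn : 0 ≤ wprod mu (m - d) c' :=
        Finset.prod_nonneg fun i _ => (hmu _).le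
      calc wprod mu m c = wprod mu (m - d) c' * ∏ i ∈ Finset.Ico i0 j0, mu (c i) :=
            hsplit
        _ ≤ wprod mu (m - d) c' * 1 := mul_le_mul_of_nonneg_left hcycprod hwnn
        _ = wprod mu (m - d) c' := mul_one _
        _ ≤ phiSeq E mu (N - 1) (c m) := hIH

/-- Telescoping product over a closed cycle. -/
lemma prod_telescope {n : ℕ} (c : Fin (n + 1) → V) (h : c (Fin.last n) = c 0)
    (f : V → ℝ) (hf : ∀ v, f v ≠ 0) :
    ∏ i : Fin n, f (c i.succ) = ∏ i : Fin n, f (c i.castSucc) := by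
  have h1 : ∏ i : Fin (n + 1), f (c i)
      = (∏ i : Fin n, f (c i.castSucc)) * f (c (Fin.last n)) :=
    Fin.prod_univ_castSucc _
  have h2 : ∏ i : Fin (n + 1), f (c i)
      = f (c 0) * ∏ i : Fin n, f (c i.succ) :=
    Fin.prod_univ_succ _
  rw [h] at h1
  have h3 : f (c 0) * ∏ i : Fin n, f (c i.succ)
      = f (c 0) * ∏ i : Fin n, f (c i.castSucc) := by
    rw [← h2, h1]; ring
  exact mul_left_cancel₀ (hf (c 0)) h3

end BellmanAux

/-- For every `L > 0`, exactly one of the following holds: consistent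
handicaps for `L` exist, or there is a simple cycle with cycle multiplier
less than `L ^ n`. -/
theorem handicaps_xor_bad_simple_cycle
    {V : Type*} [Fintype V] [Nonempty V]
    (E : V → V → Prop) (hsc : ∀ u v : V, Relation.ReflTransGen E u v)
    (lam : V → ℝ) (hlam : ∀ v, 0 < lam v)
    (L : ℝ) (hL : 0 < L) :
    Xor'
      (∃ φ : V → ℝ, (∀ v, 0 < φ v) ∧ ∀ k j, E k j → φ j * lam k ≥ L * φ k)
      (∃ n : ℕ, 1 ≤ n ∧ ∃ c : Fin (n + 1) → V,
        IsCycle E n c ∧ IsSimpleCycle n c ∧ cycleMult lam n c < L ^ n) := by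
  classical
  set mu : V → ℝ := fun k => L / lam k with hmudef
  set N := Fintype.card V with hNdef
  have hNpos : 1 ≤ N := Fintype.card_pos
  -- handicaps force every cycle to have large multiplier
  have dir1 : ∀ φ : V → ℝ, (∀ v, 0 < φ v) →
      (∀ k j, E k j → φ j * lam k ≥ L * φ k) →
      ∀ n, ∀ c : Fin (n + 1) → V, IsCycle E n c → L ^ n ≤ cycleMult lam n c := by
    intro φ hpos hineq n c hcyc
    have htel : ∏ i : Fin n, φ (c i.succ) = ∏ i : Fin n, φ (c i.castSucc) :=
      prod_telescope c hcyc.1 φ (fun v => (hpos v).ne')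
    have hle : ∏ i : Fin n, (L * φ (c i.castSucc))
        ≤ ∏ i : Fin n, (φ (c i.succ) * lam (c i.castSucc)) :=
      Finset.prod_le_prod (fun i _ => (mul_pos hL (hpos _)).le)
        (fun i _ => hineq _ _ (hcyc.2 i))
    rw [Finset.prod_mul_distrib, Finset.prod_mul_distrib, htel,
      Finset.prod_const] at hle
    have hcard : (Finset.univ : Finset (Fin n)).card = n := by simp
    rw [hcard] at hle
    have hP : 0 < ∏ i : Fin n, φ (c i.castSucc) :=
      Finset.prod_pos fun i _ => hpos _
    rw [cycleMult]
    have hle' : L ^ n * ∏ i : Fin n, φ (c i.castSucc)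
        ≤ (∏ i : Fin n, lam (c i.castSucc)) * ∏ i : Fin n, φ (c i.castSucc) := by
      calc L ^ n * ∏ i : Fin n, φ (c i.castSucc)
          ≤ (∏ i : Fin n, φ (c i.castSucc)) * ∏ i : Fin n, lam (c i.castSucc) := hle
        _ = (∏ i : Fin n, lam (c i.castSucc)) * ∏ i : Fin n, φ (c i.castSucc) :=
            mul_comm _ _
    exact le_of_mul_le_mul_right hle' hP
  by_cases h2 : ∃ n : ℕ, 1 ≤ n ∧ ∃ c : Fin (n + 1) → V,
      IsCycle E n c ∧ IsSimpleCycle n c ∧ cycleMult lam n c < L ^ n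
  · refine Or.inr ⟨h2, ?_⟩
    rintro ⟨φ, hpos, hineq⟩
    obtain ⟨n, hn, c, hcyc, hs, hlt⟩ := h2
    exact absurd hlt (not_lt.mpr (dir1 φ hpos hineq n c hcyc))
  · refine Or.inl ⟨⟨phiSeq E mu (N - 1), fun v => phiSeq_pos E mu _ v, ?_⟩, h2⟩
    intro k j hE
    push_neg at h2
    have hgood : ∀ n : ℕ, 1 ≤ n → ∀ c : Fin (n + 1) → V,
        IsCycle E n c → IsSimpleCycle n c → L ^ n ≤ cycleMult lam n c := by
      intro n hn c h1 hsimp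
      exact h2 n hn c h1 hsimp
    have hstep : mu k * phiSeq E mu (N - 1) k ≤ phiSeq E mu (N - 1 + 1) j :=
      phiSeq_edge E mu _ hE
    obtain ⟨l, hl, cw, hw, hend, hp⟩ := phiSeq_achieved E mu (N - 1 + 1) j
    have hdown : phiSeq E mu (N - 1 + 1) j ≤ phiSeq E mu (N - 1) j := by
      rw [← hp]
      have := walk_bound E lam hlam L hL hgood l cw hw
      rw [hend] at this
      exact this
    have hfin : mu k * phiSeq E mu (N - 1) k ≤ phiSeq E mu (N - 1) j :=
      hstep.trans hdown
    rw [ge_iff_le]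
    have hmul := mul_le_mul_of_nonneg_right hfin (hlam k).le
    have hkey : mu k * phiSeq E mu (N - 1) k * lam k
        = L * phiSeq E mu (N - 1) k := by
      rw [hmudef]
      field_simp
      rw [mul_div_right_comm, div_self (hlam k).ne', one_mul]
    rw [hkey] at hmul
    exact hmul
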